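/- Let n ≥ 1 and let g : 𝕋 → 𝕋 be the map sending z to the n-th root of unity ω^l closest to z (defining g arbitrarily on the measure-zero set of ties). Let 𝓔 denote the conditional expectation onto the σ-algebra generated by g, with respect to normalized Haar measure on 𝕋. Then for every integer k, 𝓔(z^k) = sinc(kπ/n) · g^k, where sinc(x) = sin(x)/x for x ≠ 0 and sinc(0) = 1. -/

import Mathlib

open MeasureTheory

/-- `sinc x = sin x / x`, `sinc 0 = 1`. -/
noncomputable def sinc (x : ℝ) : ℝ := if x = 0 then 1 else Real.sin x / x

/-- The map sending a point of the circle `𝕋 = ℝ/ℤ` to the nearest `n`-th root of unity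
(point of `(1/n)ℤ/ℤ`), using the representative in `[0,1)` and rounding (ties are
resolved arbitrarily, by `round`). -/
noncomputable def nearestRoot (n : ℕ) (x : AddCircle (1 : ℝ)) : AddCircle (1 : ℝ) :=
  (((round ((n : ℝ) * ((AddCircle.equivIco 1 0 x : ℝ)))) : ℝ) / n : ℝ)

open Set
lemma measurable_nearestRoot (n : ℕ) : Measurable (nearestRoot n) := by
  have h1 : Measurable fun x : AddCircle (1:ℝ) => (AddCircle.equivIco 1 0 x : ℝ) :=
    measurable_subtype_coe.comp (AddCircle.measurableEquivIco (1:ℝ) 0).measurable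
  have h2 : Measurable fun r : ℝ => ((round ((n:ℝ) * r) : ℤ) : ℝ) := by
    have h3 : Measurable fun r : ℝ => round ((n:ℝ) * r) := by
      simp only [round_eq]
      exact ((measurable_const_mul _).add measurable_const).floor
    exact Measurable.comp (f := fun r : ℝ => round ((n:ℝ)*r)) Measurable.of_discrete h3
  exact AddCircle.measurable_mk'.comp ((h2.comp h1).div_const _)

lemma nearestRoot_mk (n : ℕ) (hn : 0 < n) (x : ℝ) (l : ℤ) :
    nearestRoot n ((x : ℝ) : AddCircle (1:ℝ)) = (((l : ℝ)/(n:ℝ)) : AddCircle (1:ℝ)) ↔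
      (n : ℤ) ∣ (round ((n:ℝ) * x) - l) := by
  have hn' : (n:ℝ) ≠ 0 := Nat.cast_ne_zero.mpr hn.ne'
  have hfr : ((AddCircle.equivIco 1 0 ((x : ℝ) : AddCircle (1:ℝ))) : ℝ) = Int.fract x := by
    rw [AddCircle.coe_equivIco_mk_apply]; simp
  have hrd : round ((n:ℝ) * Int.fract x) = round ((n:ℝ) * x) - n * ⌊x⌋ := by
    have h : (n:ℝ) * Int.fract x = (n:ℝ) * x - ((n * ⌊x⌋ : ℤ) : ℝ) := by
      rw [Int.fract]; push_cast; ring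
    rw [h, round_sub_intCast]
  unfold nearestRoot
  rw [hfr, hrd, QuotientAddGroup.eq, AddSubgroup.mem_zmultiples_iff]
  constructor
  · rintro ⟨m, hm⟩
    simp only [zsmul_eq_mul, mul_one] at hm
    refine ⟨⌊x⌋ - m, ?_⟩
    have h2 : (((round ((n:ℝ)*x) - l : ℤ)):ℝ) = (((n:ℤ) * (⌊x⌋ - m) : ℤ):ℝ) := by
      push_cast at hm ⊢
      field_simp at hm
      linarith
    exact_mod_cast h2
  · rintro ⟨m, hm⟩
    refine ⟨⌊x⌋ - m, ?_⟩
    simp only [zsmul_eq_mul, mul_one]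
    have h2 : (round ((n:ℝ)*x) : ℝ) - l = (n:ℝ) * m := by exact_mod_cast congrArg (Int.cast : ℤ → ℝ) hm
    push_cast
    field_simp
    linarith

lemma nearestRoot_exists_val (n : ℕ) (hn : 0 < n) (x : AddCircle (1:ℝ)) :
    ∃ l : ℕ, l < n ∧ nearestRoot n x = (((l : ℝ)/(n:ℝ)) : AddCircle (1:ℝ)) := by
  induction x using QuotientAddGroup.induction_on with
  | H r =>
  set a : ℤ := round ((n:ℝ) * r) with ha
  refine ⟨(a % n).toNat, ?_, ?_⟩
  · have h1 : a % (n:ℤ) < n := Int.emod_lt_of_pos a (by exact_mod_cast hn)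
    omega
  · have h0 : 0 ≤ a % (n:ℤ) := Int.emod_nonneg a (by exact_mod_cast hn.ne')
    have hc : (((a % n).toNat : ℝ)) = ((a % (n:ℤ) : ℤ) : ℝ) := by
      exact_mod_cast congrArg (Int.cast : ℤ → ℝ) (Int.toNat_of_nonneg h0)
    rw [hc]
    rw [nearestRoot_mk n hn r (a % n)]
    refine ⟨a / n, ?_⟩
    have := Int.mul_ediv_add_emod a (n:ℤ)
    omega

lemma coe_div_inj (n : ℕ) {l l' : ℕ} (hl : l < n) (hl' : l' < n)
    (h : (((l : ℝ)/(n:ℝ)) : AddCircle (1:ℝ)) = (((l' : ℝ)/(n:ℝ)) : AddCircle (1:ℝ))) :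
    l = l' := by
  have hn : (0:ℝ) < n := by exact_mod_cast Nat.pos_of_ne_zero (by omega)
  have h1 : (l:ℝ)/(n:ℝ) ∈ Ico (0:ℝ) (0 + 1) := by
    constructor
    · positivity
    · rw [zero_add, div_lt_one hn]; exact_mod_cast hl
  have h2 : (l':ℝ)/(n:ℝ) ∈ Ico (0:ℝ) (0 + 1) := by
    constructor
    · positivity
    · rw [zero_add, div_lt_one hn]; exact_mod_cast hl'
  have := (AddCircle.coe_eq_coe_iff_of_mem_Ico h1 h2).mp h
  have : (l:ℝ) = l' := by
    field_simp at this; exact_mod_cast this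
  exact_mod_cast this

lemma atom_inter (n : ℕ) (hn : 0 < n) (l : ℕ) :
    (QuotientAddGroup.mk ⁻¹' (nearestRoot n ⁻¹' {(((l:ℝ)/(n:ℝ)) : AddCircle (1:ℝ))})) ∩
      Ioc ((l:ℝ)/n - 1/(2*n)) ((l:ℝ)/n - 1/(2*n) + 1)
    = Ioo ((l:ℝ)/n - 1/(2*n)) ((l:ℝ)/n - 1/(2*n) + 1/n) ∪ {(l:ℝ)/n - 1/(2*n) + 1} := by
  have hnR : (0:ℝ) < n := by exact_mod_cast hn
  have hne : (n:ℝ) ≠ 0 := hnR.ne'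
  have h1le : (1:ℝ) ≤ n := by exact_mod_cast hn
  set t : ℝ := (l:ℝ)/n - 1/(2*n) with ht
  have hnt : (n:ℝ) * t = l - 1/2 := by rw [ht]; field_simp [hne]
  have hnt1 : (n:ℝ) * (t + 1) = l - 1/2 + n := by rw [ht]; field_simp [hne]
  have hnth : (n:ℝ) * (t + 1/n) = l + 1/2 := by rw [ht]; field_simp [hne]; ring
  clear_value t
  ext x
  simp only [mem_inter_iff, mem_preimage, mem_singleton_iff, mem_Ioc, mem_union, mem_Ioo]
  rw [← Int.cast_natCast (R := ℝ) l, nearestRoot_mk n hn x (l:ℤ)]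
  constructor
  · rintro ⟨⟨m, hm⟩, hx1, hx2⟩
    have habs : |(n:ℝ) * x - round ((n:ℝ)*x)| ≤ 1/2 := by
      simpa [abs_sub_comm] using abs_sub_round ((n:ℝ)*x)
    have hrc : ((round ((n:ℝ)*x) : ℤ) : ℝ) = (l:ℝ) + (n:ℝ) * m := by
      have h := congrArg (Int.cast : ℤ → ℝ) hm
      push_cast at h
      linarith
    rw [abs_le, hrc] at habs
    have hy1 : (n:ℝ) * x > l - 1/2 := by
      have := mul_lt_mul_of_pos_left hx1 hnR
      linarith
    have hy2 : (n:ℝ) * x ≤ l + n - 1/2 := by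
      have := mul_le_mul_of_nonneg_left hx2 hnR.le
      linarith
    have hm0 : 0 ≤ m := by
      by_contra h
      push_neg at h
      have h' : (m:ℝ) ≤ -1 := by exact_mod_cast Int.le_sub_one_of_lt h
      have := mul_le_mul_of_nonneg_left h' hnR.le
      nlinarith
    have hm1 : m ≤ 1 := by
      by_contra h
      push_neg at h
      have h' : (2:ℝ) ≤ (m:ℝ) := by exact_mod_cast h
      have := mul_le_mul_of_nonneg_left h' hnR.le
      nlinarith
    interval_cases m
    · left
      refine ⟨hx1, ?_⟩
      have hlt : (n:ℝ)*x + 1/2 < l + 1 := by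
        have h2 := Int.lt_floor_add_one ((n:ℝ)*x + 1/2)
        rw [← round_eq, hrc] at h2
        push_cast at h2
        linarith
      have hfin : (n:ℝ) * x < (n:ℝ) * (t + 1/n) := by rw [hnth]; linarith
      exact lt_of_mul_lt_mul_left hfin hnR.le
    · right
      have h1 : (l:ℝ) + n - 1/2 ≤ (n:ℝ)*x := by
        have := habs.1
        push_cast at this
        linarith
      have hxe : (n:ℝ)*x = l + n - 1/2 := le_antisymm hy2 h1
      apply mul_left_cancel₀ hne
      rw [hnt1]; linarith
  · rintro (⟨hx1, hx2⟩ | hx)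
    · have h1n : 1/(n:ℝ) ≤ 1 := by
        rw [div_le_one hnR]; exact h1le
      have hy1 : (n:ℝ) * t < (n:ℝ) * x := mul_lt_mul_of_pos_left hx1 hnR
      have hy2 : (n:ℝ) * x < (n:ℝ) * (t + 1/n) := mul_lt_mul_of_pos_left hx2 hnR
      rw [hnt] at hy1
      rw [hnth] at hy2
      refine ⟨⟨0, ?_⟩, hx1, by linarith⟩
      have hround : round ((n:ℝ)*x) = (l:ℤ) := by
        rw [round_eq]
        apply Int.floor_eq_iff.mpr
        constructor
        · push_cast; linarith
        · push_cast; linarith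
      rw [hround]; ring
    · subst hx
      refine ⟨⟨1, ?_⟩, by linarith [one_div_pos.mpr hnR], le_refl _⟩
      have hround : round ((n:ℝ)*(t+1)) = (l:ℤ) + n := by
        rw [hnt1, round_eq]
        have h3 : (l:ℝ) - 1/2 + n + 1/2 = ((l + n : ℤ) : ℝ) := by push_cast; ring
        rw [h3, Int.floor_intCast]
      rw [hround]
      ring

lemma setIntegral_circle (t : ℝ) {A : Set (AddCircle (1:ℝ))} (hA : MeasurableSet A)
    {f : AddCircle (1:ℝ) → ℂ} (hf : Continuous f) :
    ∫ x in A, f x ∂(volume : Measure (AddCircle (1:ℝ))) =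
      ∫ x in (QuotientAddGroup.mk ⁻¹' A) ∩ Ioc t (t+1), f ((x : ℝ) : AddCircle (1:ℝ)) := by
  have hmk : Measurable (QuotientAddGroup.mk : ℝ → AddCircle (1:ℝ)) := AddCircle.measurable_mk'
  have hmap := (AddCircle.measurePreserving_mk (1:ℝ) t).map_eq
  rw [← hmap, Measure.restrict_map hmk hA,
    integral_map hmk.aemeasurable hf.aestronglyMeasurable,
    Measure.restrict_restrict (hmk hA)]

lemma atom_measurableSet (n : ℕ) (l : ℕ) :
    MeasurableSet (nearestRoot n ⁻¹' {(((l:ℝ)/(n:ℝ)) : AddCircle (1:ℝ))}) :=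
  measurable_nearestRoot n (measurableSet_singleton _)

lemma atom_volume (n : ℕ) (hn : 0 < n) (l : ℕ) :
    volume (nearestRoot n ⁻¹' {(((l:ℝ)/(n:ℝ)) : AddCircle (1:ℝ))}) = ENNReal.ofReal (1/n) := by
  have hnR : (0:ℝ) < n := by exact_mod_cast hn
  rw [AddCircle.add_projection_respects_measure (1:ℝ) ((l:ℝ)/n - 1/(2*n)) (atom_measurableSet n l)]
  rw [atom_inter n hn l]
  have h1 : volume ({(l:ℝ)/n - 1/(2*n) + 1} : Set ℝ) = 0 := Real.volume_singleton
  have h2 : volume (Ioo ((l:ℝ)/n - 1/(2*n)) ((l:ℝ)/n - 1/(2*n) + 1/n)) = ENNReal.ofReal (1/n) := by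
    rw [Real.volume_Ioo]
    congr 1
    ring
  refine le_antisymm ?_ ?_
  · refine (measure_union_le _ _).trans ?_
    rw [h1, h2, add_zero]
  · rw [← h2]
    exact measure_mono subset_union_left

lemma atom_integral (n : ℕ) (hn : 0 < n) (l : ℕ) (k : ℤ) :
    ∫ x in nearestRoot n ⁻¹' {(((l:ℝ)/(n:ℝ)) : AddCircle (1:ℝ))}, (fourier k x : ℂ) ∂volume
      = (((1:ℝ)/n : ℝ) : ℂ) * ((sinc (k * Real.pi / n) : ℝ) : ℂ) *
        fourier k ((((l:ℝ)/(n:ℝ)) : AddCircle (1:ℝ))) := by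
  have hnR : (0:ℝ) < n := by exact_mod_cast hn
  have hne : (n:ℝ) ≠ 0 := hnR.ne'
  have hle : (l:ℝ)/n - 1/(2*n) ≤ (l:ℝ)/n - 1/(2*n) + 1/n := by
    have : (0:ℝ) < 1/n := by positivity
    linarith
  have hae : (Ioo ((l:ℝ)/n - 1/(2*n)) ((l:ℝ)/n - 1/(2*n) + 1/n) ∪ {(l:ℝ)/n - 1/(2*n) + 1}
      : Set ℝ) =ᵐ[volume] Ioc ((l:ℝ)/n - 1/(2*n)) ((l:ℝ)/n - 1/(2*n) + 1/n) := by
    rw [MeasureTheory.ae_eq_set]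
    constructor
    · refine measure_mono_null (fun x hx => ?_) (Real.volume_singleton (a := (l:ℝ)/n - 1/(2*n) + 1))
      rcases hx with ⟨hx1 | hx2, hx3⟩
      · exact absurd (Ioo_subset_Ioc_self hx1) hx3
      · exact hx2
    · refine measure_mono_null (fun x hx => ?_) (Real.volume_singleton (a := (l:ℝ)/n - 1/(2*n) + 1/n))
      rcases hx with ⟨⟨hx1, hx2⟩, hx3⟩
      simp only [mem_union, mem_Ioo, mem_singleton_iff, not_or, not_and, not_lt] at hx3
      exact mem_singleton_iff.mpr (le_antisymm hx2 (hx3.1 hx1))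
  rw [setIntegral_circle ((l:ℝ)/n - 1/(2*n)) (atom_measurableSet n l) (fourier k).continuous,
    atom_inter n hn l, setIntegral_congr_set hae,
    ← intervalIntegral.integral_of_le hle]
  rcases eq_or_ne k 0 with rfl | hk
  · simp only [fourier_zero, intervalIntegral.integral_const, smul_eq_mul, mul_one]
    have h0 : (0:ℤ) * Real.pi / n = 0 := by push_cast; ring
    rw [h0]
    simp only [sinc, if_pos rfl]
    push_cast
    simp
  · have hkC : (k:ℂ) ≠ 0 := Int.cast_ne_zero.mpr hk
    have hπ : (Real.pi : ℂ) ≠ 0 := Complex.ofReal_ne_zero.mpr Real.pi_ne_zero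
    set c : ℂ := 2 * Real.pi * Complex.I * k with hc
    have hc0 : c ≠ 0 := by
      simp only [hc]
      exact mul_ne_zero (mul_ne_zero (mul_ne_zero two_ne_zero hπ) Complex.I_ne_zero) hkC
    have hint : ∀ x : ℝ, fourier k ((x : ℝ) : AddCircle (1:ℝ)) = Complex.exp (c * x) := by
      intro x
      rw [fourier_coe_apply]
      push_cast
      rw [div_one, hc]
    simp only [hint]
    rw [integral_exp_mul_complex hc0]
    set u : ℝ := k * Real.pi / n with hu
    have hu0 : u ≠ 0 := by
      rw [hu]
      exact div_ne_zero (mul_ne_zero (Int.cast_ne_zero.mpr hk) Real.pi_ne_zero) hne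
    set w : ℂ := c * (((l:ℝ)/(n:ℝ) : ℝ) : ℂ) with hw
    have hc1 : c * (((l:ℝ)/n - 1/(2*n) + 1/n : ℝ) : ℂ) = w + u * Complex.I := by
      rw [hc, hw, hu]
      push_cast
      field_simp
      ring
    have hc2 : c * (((l:ℝ)/n - 1/(2*n) : ℝ) : ℂ) = w - u * Complex.I := by
      rw [hc, hw, hu]
      push_cast
      field_simp
      ring
    rw [hc1, hc2, Complex.exp_add, sub_eq_add_neg w, Complex.exp_add]
    have he1 : Complex.exp ((u:ℝ) * Complex.I) = Complex.cos u + Complex.sin u * Complex.I :=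
      Complex.exp_mul_I _
    have he2 : Complex.exp (-((u:ℝ) * Complex.I)) = Complex.cos u - Complex.sin u * Complex.I := by
      have h4 : -((u:ℝ) * Complex.I) = ((-u : ℝ) : ℂ) * Complex.I := by push_cast; ring
      rw [h4, Complex.exp_mul_I]
      push_cast
      rw [Complex.cos_neg, Complex.sin_neg]
      ring
    rw [he1, he2]
    rw [sinc, if_neg hu0]
    have hsin : Complex.sin (u:ℂ) = ((Real.sin u : ℝ) : ℂ) := (Complex.ofReal_sin u).symm
    have hcos : Complex.cos (u:ℂ) = ((Real.cos u : ℝ) : ℂ) := (Complex.ofReal_cos u).symm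
    rw [hsin, hcos]
    have huC : ((u:ℝ):ℂ) = (k:ℂ) * (Real.pi:ℂ) / (n:ℂ) := by rw [hu]; push_cast; ring
    push_cast
    rw [huC]
    rw [hc]
    have hnC : ((n:ℕ):ℂ) ≠ 0 := Nat.cast_ne_zero.mpr hn.ne'
    field_simp [hnC, hkC, hπ, Complex.I_ne_zero]
    ring

/-- for `n ≥ 1`, let `g` send `z ∈ 𝕋` to the nearest `n`-th root of unity, and
let `𝓔` be the conditional expectation (w.r.t. normalized Haar measure) onto the σ-algebra
generated by `g`.  Then `𝓔(z^k) = sinc(kπ/n) · g^k` for every integer `k`. -/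
theorem condexp_fourier_nearestRoot (n : ℕ) (hn : 1 ≤ n) (k : ℤ) :
    (volume[fun x : AddCircle (1 : ℝ) => (fourier k x : ℂ) |
        MeasurableSpace.comap (nearestRoot n) inferInstance])
      =ᵐ[volume]
    fun x : AddCircle (1 : ℝ) =>
      (sinc (k * Real.pi / n) : ℂ) * fourier k (nearestRoot n x) := by
  classical
  have hn' : 0 < n := hn
  have hnR : (0:ℝ) < n := by exact_mod_cast hn'
  have hg : Measurable (nearestRoot n) := measurable_nearestRoot n
  have hm : MeasurableSpace.comap (nearestRoot n) inferInstance ≤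
      (inferInstance : MeasurableSpace (AddCircle (1:ℝ))) := hg.comap_le
  have hnorm : ∀ x : AddCircle (1:ℝ), ‖(fourier k x : ℂ)‖ = 1 := fun x => Circle.norm_coe _
  have hf : Integrable (fun x : AddCircle (1:ℝ) => (fourier k x : ℂ)) volume := by
    refine Integrable.mono' (integrable_const 1) ((fourier k).continuous.aestronglyMeasurable) ?_
    filter_upwards with x
    rw [hnorm x]
  have hFmeas : Measurable (fun x : AddCircle (1:ℝ) =>
      (sinc (k * Real.pi / n) : ℂ) * fourier k (nearestRoot n x)) :=
    Measurable.const_mul ((fourier k).continuous.measurable.comp hg) _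
  have hFint : Integrable (fun x : AddCircle (1:ℝ) =>
      (sinc (k * Real.pi / n) : ℂ) * fourier k (nearestRoot n x)) volume := by
    refine Integrable.mono' (integrable_const (|sinc (k * Real.pi / n)|))
      hFmeas.aestronglyMeasurable ?_
    filter_upwards with x
    simp only [norm_mul, hnorm (nearestRoot n x), mul_one, Complex.norm_real]
    exact le_refl _
  refine (ae_eq_condExp_of_forall_setIntegral_eq hm hf ?_ ?_ ?_).symm
  · intro s _ _
    exact hFint.integrableOn
  · rintro s ⟨u, hu, rfl⟩ -
    have hset : nearestRoot n ⁻¹' u =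
        ⋃ l ∈ (Finset.range n).filter
          (fun l : ℕ => (((l:ℝ)/(n:ℝ)) : AddCircle (1:ℝ)) ∈ u),
          nearestRoot n ⁻¹' {(((l:ℝ)/(n:ℝ)) : AddCircle (1:ℝ))} := by
      ext x
      simp only [mem_preimage, mem_iUnion, mem_singleton_iff, Finset.mem_filter,
        Finset.mem_range, exists_prop]
      constructor
      · intro hx
        obtain ⟨l, hl, hvl⟩ := nearestRoot_exists_val n hn' x
        exact ⟨l, ⟨hl, by rw [← hvl]; exact hx⟩, hvl⟩
      · rintro ⟨l, ⟨_, hlu⟩, hvl⟩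
        rw [hvl]
        exact hlu
    have hmeasA : ∀ l ∈ (Finset.range n).filter
          (fun l : ℕ => (((l:ℝ)/(n:ℝ)) : AddCircle (1:ℝ)) ∈ u),
        MeasurableSet (nearestRoot n ⁻¹' {(((l:ℝ)/(n:ℝ)) : AddCircle (1:ℝ))}) :=
      fun l _ => atom_measurableSet n l
    have hdisj : Set.Pairwise (((Finset.range n).filter
          (fun l : ℕ => (((l:ℝ)/(n:ℝ)) : AddCircle (1:ℝ)) ∈ u) : Finset ℕ) : Set ℕ)
        (Function.onFun Disjoint fun l : ℕ => nearestRoot n ⁻¹' {(((l:ℝ)/(n:ℝ)) : AddCircle (1:ℝ))}) := by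
      intro l hl l' hl' hll'
      simp only [Finset.coe_filter, Finset.mem_range, mem_setOf_eq] at hl hl'
      rw [Function.onFun, Set.disjoint_left]
      intro x hx hx'
      rw [mem_preimage, mem_singleton_iff] at hx hx'
      exact hll' (coe_div_inj n hl.1 hl'.1 (hx ▸ hx'))
    rw [hset, integral_biUnion_finset _ hmeasA hdisj (fun l _ => hFint.integrableOn),
      integral_biUnion_finset _ hmeasA hdisj (fun l _ => hf.integrableOn)]
    refine Finset.sum_congr rfl (fun l _ => ?_)
    rw [atom_integral n hn' l k]
    have hconst : ∫ x in nearestRoot n ⁻¹' {(((l:ℝ)/(n:ℝ)) : AddCircle (1:ℝ))},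
          (sinc (k * Real.pi / n) : ℂ) * fourier k (nearestRoot n x) ∂volume
        = ∫ _x in nearestRoot n ⁻¹' {(((l:ℝ)/(n:ℝ)) : AddCircle (1:ℝ))},
            ((sinc (k * Real.pi / n) : ℝ) : ℂ) *
              fourier k ((((l:ℝ)/(n:ℝ)) : AddCircle (1:ℝ))) ∂volume := by
      refine setIntegral_congr_fun (atom_measurableSet n l) (fun x hx => ?_)
      rw [mem_preimage, mem_singleton_iff] at hx
      rw [hx]
    rw [hconst, setIntegral_const, measureReal_def, atom_volume n hn' l,
      ENNReal.toReal_ofReal (by positivity : (0:ℝ) ≤ 1/(n:ℝ))]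
    rw [Complex.real_smul]
    push_cast
    ring
  · refine StronglyMeasurable.aestronglyMeasurable ?_
    refine Measurable.stronglyMeasurable ?_
    have hgm : Measurable[MeasurableSpace.comap (nearestRoot n) inferInstance] (nearestRoot n) :=
      fun s hs => ⟨s, hs, rfl⟩
    exact Measurable.const_mul ((fourier k).continuous.measurable.comp hgm) _
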